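/- If Q is a Hermitian block matrix [[X, Y],[Y*, Z]] with Z invertible, then sign(Q) = sign(X - Y Z⁻¹ Y*) + sign(Z). -/

import Mathlib

open Matrix

/-- The signature of a Hermitian matrix: the number of positive eigenvalues
minus the number of negative eigenvalues. -/
noncomputable def matrixSignature {n : Type*} [Fintype n] [DecidableEq n]
    {M : Matrix n n ℂ} (hM : M.IsHermitian) : ℤ :=
  ((Finset.univ.filter fun i => 0 < hM.eigenvalues i).card : ℤ) -
  ((Finset.univ.filter fun i => hM.eigenvalues i < 0).card : ℤ)

open Finset in
private lemma diag_quad {ι : Type*} [Fintype ι] [DecidableEq ι] (c : ι → ℝ) (y : ι → ℂ) :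
    star y ⬝ᵥ (Matrix.diagonal (fun i => (c i : ℂ))) *ᵥ y
      = ((∑ i, c i * Complex.normSq (y i) : ℝ) : ℂ) := by
  push_cast
  simp only [dotProduct, mulVec_diagonal, Pi.star_apply]
  refine Finset.sum_congr rfl fun i _ => ?_
  rw [show (star (y i)) * ((c i : ℂ) * y i) = (c i : ℂ) * ((starRingEnd ℂ) (y i) * y i) by
    simp [RCLike.star_def]; ring]
  rw [← Complex.normSq_eq_conj_mul_self]

open Finset in
private lemma card_pos_le_of_congr {ι : Type*} [Fintype ι] [DecidableEq ι]
    (d e : ι → ℝ) (B : Matrix ι ι ℂ) (hB : IsUnit B.det)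
    (h : Matrix.diagonal (fun i => (e i : ℂ)) = B * Matrix.diagonal (fun i => (d i : ℂ)) * Bᴴ) :
    (univ.filter fun i => 0 < d i).card ≤ (univ.filter fun i => 0 < e i).card := by
  have hBH : IsUnit Bᴴ.det := by rw [Matrix.det_conjTranspose]; exact isUnit_star.mpr hB
  -- extension by zero
  let ext : ({i // 0 < d i} → ℂ) →ₗ[ℂ] (ι → ℂ) :=
    { toFun := fun v j => if hj : 0 < d j then v ⟨j, hj⟩ else 0
      map_add' := by intro v w; funext j; by_cases hj : 0 < d j <;> simp [hj]
      map_smul' := by intro c v; funext j; by_cases hj : 0 < d j <;> simp [hj] }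
  let T : ({i // 0 < d i} → ℂ) →ₗ[ℂ] ({i // 0 < e i} → ℂ) :=
    (LinearMap.funLeft ℂ ℂ (Subtype.val)) ∘ₗ (Matrix.mulVecLin (Bᴴ)⁻¹) ∘ₗ ext
  have hT : Function.Injective T := by
    rw [← LinearMap.ker_eq_bot, LinearMap.ker_eq_bot']
    intro v hv
    obtain ⟨x, hx⟩ : ∃ x : ι → ℂ, x = (Bᴴ)⁻¹ *ᵥ (ext v) := ⟨_, rfl⟩
    have hBx : Bᴴ *ᵥ x = ext v := by
      rw [hx, Matrix.mulVec_mulVec, Matrix.mul_nonsing_inv _ hBH, Matrix.one_mulVec]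
    have hxz : ∀ i, 0 < e i → x i = 0 := by
      intro i hi
      have := congrFun hv ⟨i, hi⟩
      rw [hx]
      simpa [T] using this
    have key : (∑ i, e i * Complex.normSq (x i)) = ∑ i, d i * Complex.normSq ((ext v) i) := by
      have h1 : star x ⬝ᵥ (Matrix.diagonal (fun i => (e i : ℂ))) *ᵥ x
          = star (Bᴴ *ᵥ x) ⬝ᵥ (Matrix.diagonal (fun i => (d i : ℂ))) *ᵥ (Bᴴ *ᵥ x) := by
        rw [h, ← Matrix.mulVec_mulVec, ← Matrix.mulVec_mulVec, Matrix.dotProduct_mulVec]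
        congr 1
        have hstar : star (Bᴴ *ᵥ x) = star x ᵥ* B := by
          rw [Matrix.star_mulVec, Matrix.conjTranspose_conjTranspose]
        exact hstar.symm
      rw [diag_quad, hBx, diag_quad] at h1
      exact_mod_cast h1
    have hle : (∑ i, e i * Complex.normSq (x i)) ≤ 0 := by
      apply Finset.sum_nonpos
      intro i _
      by_cases hi : 0 < e i
      · simp [hxz i hi]
      · exact mul_nonpos_of_nonpos_of_nonneg (not_lt.mp hi) (Complex.normSq_nonneg _)
    have hterm : ∀ i, 0 ≤ d i * Complex.normSq ((ext v) i) := by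
      intro i
      by_cases hi : 0 < d i
      · exact mul_nonneg hi.le (Complex.normSq_nonneg _)
      · simp [ext, hi]
    have hzero : (∑ i, d i * Complex.normSq ((ext v) i)) = 0 :=
      le_antisymm (key ▸ hle) (Finset.sum_nonneg fun i _ => hterm i)
    funext j
    have hj := (Finset.sum_eq_zero_iff_of_nonneg (fun i _ => hterm i)).mp hzero j.1 (mem_univ _)
    have hev : (ext v) j.1 = 0 := by
      rcases mul_eq_zero.mp hj with h' | h'
      · exact absurd h' (ne_of_gt j.2)
      · exact Complex.normSq_eq_zero.mp h'
    simpa [ext, j.2] using hev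
  have := LinearMap.finrank_le_finrank_of_injective hT
  simpa [Module.finrank_fintype_fun_eq_card, Fintype.card_subtype] using this

open Finset in
private lemma card_pos_eq_of_congr {ι : Type*} [Fintype ι] [DecidableEq ι]
    (d e : ι → ℝ) (B : Matrix ι ι ℂ) (hB : IsUnit B.det)
    (h : Matrix.diagonal (fun i => (e i : ℂ)) = B * Matrix.diagonal (fun i => (d i : ℂ)) * Bᴴ) :
    (univ.filter fun i => 0 < e i).card = (univ.filter fun i => 0 < d i).card := by
  refine le_antisymm ?_ (card_pos_le_of_congr d e B hB h)
  have hB' : IsUnit (B⁻¹).det := (Matrix.isUnit_nonsing_inv_det B hB)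
  refine card_pos_le_of_congr e d B⁻¹ hB' ?_
  rw [h, Matrix.conjTranspose_nonsing_inv]
  rw [← Matrix.mul_assoc, ← Matrix.mul_assoc, Matrix.nonsing_inv_mul _ hB, Matrix.one_mul,
    Matrix.mul_assoc, Matrix.mul_nonsing_inv _ (by rwa [Matrix.det_conjTranspose, isUnit_star]),
    Matrix.mul_one]

open Finset in
private lemma card_neg_eq_of_congr {ι : Type*} [Fintype ι] [DecidableEq ι]
    (d e : ι → ℝ) (B : Matrix ι ι ℂ) (hB : IsUnit B.det)
    (h : Matrix.diagonal (fun i => (e i : ℂ)) = B * Matrix.diagonal (fun i => (d i : ℂ)) * Bᴴ) :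
    (univ.filter fun i => e i < 0).card = (univ.filter fun i => d i < 0).card := by
  have hne : Matrix.diagonal (fun i => ((-e) i : ℂ)) = - Matrix.diagonal (fun i => (e i : ℂ)) := by
    ext i j
    by_cases hij : i = j
    · subst hij; simp
    · simp [Matrix.diagonal_apply_ne _ hij]
  have hnd : Matrix.diagonal (fun i => ((-d) i : ℂ)) = - Matrix.diagonal (fun i => (d i : ℂ)) := by
    ext i j
    by_cases hij : i = j
    · subst hij; simp
    · simp [Matrix.diagonal_apply_ne _ hij]
  have h' : Matrix.diagonal (fun i => ((-e) i : ℂ))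
      = B * Matrix.diagonal (fun i => ((-d) i : ℂ)) * Bᴴ := by
    rw [hne, hnd, h, Matrix.mul_neg, Matrix.neg_mul]
  have := card_pos_eq_of_congr (-d) (-e) B hB h'
  simpa [neg_pos] using this

open Finset in
private lemma counts_of_congr {ι : Type*} [Fintype ι] [DecidableEq ι]
    {M : Matrix ι ι ℂ} (hM : M.IsHermitian)
    (C : Matrix ι ι ℂ) (hC : IsUnit C.det) (d : ι → ℝ)
    (h : M = C * Matrix.diagonal (fun i => (d i : ℂ)) * Cᴴ) :
    (univ.filter fun i => 0 < hM.eigenvalues i).card = (univ.filter fun i => 0 < d i).card ∧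
    (univ.filter fun i => hM.eigenvalues i < 0).card = (univ.filter fun i => d i < 0).card := by
  set U : Matrix ι ι ℂ := (hM.eigenvectorUnitary : Matrix ι ι ℂ) with hU
  have hU1 : star U * U = 1 := Matrix.mem_unitaryGroup_iff'.mp (hM.eigenvectorUnitary).2
  have hspec : star U * M * U = Matrix.diagonal (fun i => ((hM.eigenvalues i : ℝ) : ℂ)) := by
    have h0 := hM.spectral_theorem
    rw [Unitary.conjStarAlgAut_apply, ← hU] at h0
    conv_lhs => rw [h0]
    simp only [← Matrix.mul_assoc]
    rw [hU1, Matrix.one_mul, Matrix.mul_assoc, hU1, Matrix.mul_one]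
    rfl
  have hcong : Matrix.diagonal (fun i => ((hM.eigenvalues i : ℝ) : ℂ))
      = (star U * C) * Matrix.diagonal (fun i => (d i : ℂ)) * (star U * C)ᴴ := by
    rw [← hspec, h]
    have hct : (star U * C)ᴴ = Cᴴ * U := by
      rw [Matrix.conjTranspose_mul, Matrix.star_eq_conjTranspose,
        Matrix.conjTranspose_conjTranspose]
    rw [hct]
    simp only [Matrix.mul_assoc]
  have hdet : IsUnit (star U * C).det := by
    rw [Matrix.det_mul]
    refine IsUnit.mul ?_ hC
    have hd : (star U).det * U.det = 1 := by rw [← Matrix.det_mul, hU1, Matrix.det_one]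
    exact IsUnit.of_mul_eq_one _ hd
  exact ⟨card_pos_eq_of_congr d _ _ hdet hcong, card_neg_eq_of_congr d _ _ hdet hcong⟩

theorem signature_block_schur
    {m n : Type*} [Fintype m] [Fintype n] [DecidableEq m] [DecidableEq n]
    (X : Matrix m m ℂ) (Y : Matrix m n ℂ) (Z : Matrix n n ℂ)
    (hZdet : IsUnit Z.det)
    (hQ : (Matrix.fromBlocks X Y Yᴴ Z).IsHermitian)
    (hS : (X - Y * Z⁻¹ * Yᴴ).IsHermitian)
    (hZ : Z.IsHermitian) :
    matrixSignature hQ = matrixSignature hS + matrixSignature hZ := by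
  classical
  haveI : Invertible Z := Z.invertibleOfIsUnitDet hZdet
  have hinvof : ⅟Z = Z⁻¹ := Matrix.invOf_eq_nonsing_inv Z
  set a : m → ℝ := hS.eigenvalues with ha
  set b : n → ℝ := hZ.eigenvalues with hb
  set US : Matrix m m ℂ := (hS.eigenvectorUnitary : Matrix m m ℂ) with hUS
  set UZ : Matrix n n ℂ := (hZ.eigenvectorUnitary : Matrix n n ℂ) with hUZ
  have hSspec : X - Y * Z⁻¹ * Yᴴ = US * Matrix.diagonal (fun i => ((a i : ℝ) : ℂ)) * USᴴ := by
    have h0 := hS.spectral_theorem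
    rw [Unitary.conjStarAlgAut_apply, ← hUS] at h0
    exact h0
  have hZspec : Z = UZ * Matrix.diagonal (fun i => ((b i : ℝ) : ℂ)) * UZᴴ := by
    have h0 := hZ.spectral_theorem
    rw [Unitary.conjStarAlgAut_apply, ← hUZ] at h0
    exact h0
  have hLDU := Matrix.fromBlocks_eq_of_invertible₂₂ X Y Yᴴ Z
  rw [hinvof] at hLDU
  have hlower : (Matrix.fromBlocks (1 : Matrix m m ℂ) (Y * Z⁻¹) 0 1)ᴴ
      = Matrix.fromBlocks (1 : Matrix m m ℂ) (0 : Matrix m n ℂ) (Z⁻¹ * Yᴴ) (1 : Matrix n n ℂ) := by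
    simp only [Matrix.fromBlocks_conjTranspose, Matrix.conjTranspose_one,
      Matrix.conjTranspose_zero, Matrix.conjTranspose_mul]
    rw [Matrix.conjTranspose_nonsing_inv, hZ.eq]
  set C : Matrix (m ⊕ n) (m ⊕ n) ℂ :=
    Matrix.fromBlocks 1 (Y * Z⁻¹) 0 1 * Matrix.fromBlocks US 0 0 UZ with hC
  set dd : m ⊕ n → ℝ := Sum.elim a b with hdd
  have hdiag : Matrix.fromBlocks (Matrix.diagonal fun i => ((a i : ℝ) : ℂ)) 0 0
      (Matrix.diagonal fun i => ((b i : ℝ) : ℂ))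
      = Matrix.diagonal (fun i => ((dd i : ℝ) : ℂ)) := by
    rw [Matrix.fromBlocks_diagonal]
    refine congrArg _ (funext fun i => ?_)
    cases i <;> rfl
  have hQeq : Matrix.fromBlocks X Y Yᴴ Z
      = C * Matrix.diagonal (fun i => ((dd i : ℝ) : ℂ)) * Cᴴ := by
    rw [hLDU, ← hlower]
    have hmid : Matrix.fromBlocks (X - Y * Z⁻¹ * Yᴴ) 0 0 Z
        = Matrix.fromBlocks US 0 0 UZ * Matrix.diagonal (fun i => ((dd i : ℝ) : ℂ))
          * (Matrix.fromBlocks US 0 0 UZ)ᴴ := by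
      rw [← hdiag, Matrix.fromBlocks_conjTranspose]
      simp only [Matrix.fromBlocks_multiply, Matrix.mul_zero, Matrix.zero_mul, add_zero, zero_add,
        Matrix.conjTranspose_zero]
      rw [← hSspec, ← hZspec]
    rw [hmid, hC]
    simp only [Matrix.conjTranspose_mul, Matrix.mul_assoc]
  have hCdet : IsUnit C.det := by
    rw [hC, Matrix.det_mul, Matrix.det_fromBlocks_zero₂₁, Matrix.det_fromBlocks_zero₂₁,
      Matrix.det_one, Matrix.det_one, one_mul, one_mul]
    have hUSd : IsUnit US.det := by
      have h1 : star US * US = 1 := Matrix.mem_unitaryGroup_iff'.mp (hS.eigenvectorUnitary).2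
      have hd : (star US).det * US.det = 1 := by rw [← Matrix.det_mul, h1, Matrix.det_one]
      rw [mul_comm] at hd
      exact IsUnit.of_mul_eq_one _ hd
    have hUZd : IsUnit UZ.det := by
      have h1 : star UZ * UZ = 1 := Matrix.mem_unitaryGroup_iff'.mp (hZ.eigenvectorUnitary).2
      have hd : (star UZ).det * UZ.det = 1 := by rw [← Matrix.det_mul, h1, Matrix.det_one]
      rw [mul_comm] at hd
      exact IsUnit.of_mul_eq_one _ hd
    exact one_mul (US.det * UZ.det) ▸ hUSd.mul hUZd
  obtain ⟨hpos, hneg⟩ := counts_of_congr hQ C hCdet dd hQeq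
  have hposs : (Finset.univ.filter fun i : m ⊕ n => 0 < dd i).card
      = (Finset.univ.filter fun i : m => 0 < a i).card
        + (Finset.univ.filter fun i : n => 0 < b i).card := by
    rw [← Fintype.card_subtype, ← Fintype.card_subtype, ← Fintype.card_subtype,
      ← Fintype.card_sum]
    exact Fintype.card_congr (Equiv.subtypeSum)
  have hnegs : (Finset.univ.filter fun i : m ⊕ n => dd i < 0).card
      = (Finset.univ.filter fun i : m => a i < 0).card
        + (Finset.univ.filter fun i : n => b i < 0).card := by
    rw [← Fintype.card_subtype, ← Fintype.card_subtype, ← Fintype.card_subtype,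
      ← Fintype.card_sum]
    exact Fintype.card_congr (Equiv.subtypeSum)
  unfold matrixSignature
  rw [hpos, hneg, hposs, hnegs]
  push_cast
  ring
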